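/- Let N ≥ 3 be an integer, μ ∈ (0,1/4], and α := 1/2 + √(1/4 − μ). Then the function K(x) := x_N^{α}·|x|^{2−N−2α} satisfies ΔK(x) + (μ/x_N²)·K(x) = 0 for every x ∈ ℝ^N with x_N > 0. -/

import Mathlib

open MeasureTheory Metric Set

/-- The Laplacian of `u : ℝ^N → ℝ`, as the sum of the second partial derivatives
in the coordinate directions. -/
noncomputable def lap {N : ℕ} (u : EuclideanSpace ℝ (Fin N) → ℝ)
    (x : EuclideanSpace ℝ (Fin N)) : ℝ :=
  ∑ i : Fin N, fderiv ℝ (fun y => fderiv ℝ u y (EuclideanSpace.single i 1)) x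
    (EuclideanSpace.single i 1)

/-- The last coordinate index of `Fin N`. -/
def lastIdx (N : ℕ) (h : 0 < N) : Fin N := ⟨N - 1, by omega⟩

namespace Stmt18Aux

open Filter Topology

variable {N : ℕ}

noncomputable def S (y : EuclideanSpace ℝ (Fin N)) : ℝ := ∑ i, (y i) ^ 2

noncomputable def V (j : Fin N) (a b : ℝ) (y : EuclideanSpace ℝ (Fin N)) : ℝ :=
  (y j) ^ a * (S y) ^ b

lemma S_nonneg (y : EuclideanSpace ℝ (Fin N)) : 0 ≤ S y :=
  Finset.sum_nonneg fun _ _ => sq_nonneg _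

lemma S_pos {j : Fin N} {y : EuclideanSpace ℝ (Fin N)} (hy : 0 < y j) : 0 < S y :=
  lt_of_lt_of_le (by positivity)
    (Finset.single_le_sum (f := fun i => (y i) ^ 2) (fun _ _ => sq_nonneg _) (Finset.mem_univ j))

noncomputable def W (y : EuclideanSpace ℝ (Fin N)) : EuclideanSpace ℝ (Fin N) →L[ℝ] ℝ :=
  ∑ i, (2 * y i) • EuclideanSpace.proj i

lemma hasFDerivAt_S (y : EuclideanSpace ℝ (Fin N)) : HasFDerivAt S (W y) y := by
  have : ∀ i : Fin N, HasFDerivAt (fun z : EuclideanSpace ℝ (Fin N) => (z i) ^ 2)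
      ((2 * y i) • (EuclideanSpace.proj i : EuclideanSpace ℝ (Fin N) →L[ℝ] ℝ)) y := by
    intro i
    have h := ((EuclideanSpace.proj i : EuclideanSpace ℝ (Fin N) →L[ℝ] ℝ).hasFDerivAt
      (x := y)).fun_mul ((EuclideanSpace.proj i : EuclideanSpace ℝ (Fin N) →L[ℝ] ℝ).hasFDerivAt
      (x := y))
    simpa [sq, two_mul, add_smul] using h
  exact HasFDerivAt.fun_sum fun i _ => this i

noncomputable def D (j : Fin N) (a b : ℝ) (y : EuclideanSpace ℝ (Fin N)) :
    EuclideanSpace ℝ (Fin N) →L[ℝ] ℝ :=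
  ((y j) ^ a * (b * (S y) ^ (b - 1))) • W y
    + ((S y) ^ b * (a * (y j) ^ (a - 1))) • EuclideanSpace.proj j

lemma hasFDerivAt_V (j : Fin N) (a b : ℝ) {y : EuclideanSpace ℝ (Fin N)} (hy : 0 < y j) :
    HasFDerivAt (V j a b) (D j a b y) y := by
  have hc : HasFDerivAt (fun z : EuclideanSpace ℝ (Fin N) => (z j) ^ a)
      ((a * (y j) ^ (a - 1)) • (EuclideanSpace.proj j : EuclideanSpace ℝ (Fin N) →L[ℝ] ℝ)) y :=
    HasFDerivAt.rpow_const
      ((EuclideanSpace.proj j : EuclideanSpace ℝ (Fin N) →L[ℝ] ℝ).hasFDerivAt) (Or.inl hy.ne')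
  have hd : HasFDerivAt (fun z : EuclideanSpace ℝ (Fin N) => (S z) ^ b)
      ((b * (S y) ^ (b - 1)) • W y) y :=
    HasFDerivAt.rpow_const (hasFDerivAt_S y) (Or.inl (S_pos hy).ne')
  have := hc.fun_mul hd
  rw [D]
  rw [← smul_smul (y j ^ a), ← smul_smul (S y ^ b)]
  exact this

lemma D_apply (j : Fin N) (a b : ℝ) (y : EuclideanSpace ℝ (Fin N)) (k : Fin N) :
    D j a b y (EuclideanSpace.single k 1)
      = (y j) ^ a * (b * (S y) ^ (b - 1)) * (2 * y k)
        + (S y) ^ b * (a * (y j) ^ (a - 1)) * (if j = k then 1 else 0) := by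
  simp only [D, W, ContinuousLinearMap.add_apply, ContinuousLinearMap.smul_apply,
    ContinuousLinearMap.sum_apply, PiLp.proj_apply, EuclideanSpace.single_apply,
    smul_eq_mul, mul_ite, mul_one, mul_zero]
  rw [Finset.sum_ite_eq' Finset.univ]
  simp [eq_comm]

theorem main_aux (N : ℕ) (hN : 3 ≤ N) (μ α : ℝ)
    (hμ : μ ∈ Set.Ioc (0:ℝ) (1/4)) (hα : α = 1/2 + Real.sqrt (1/4 - μ))
    (j : Fin N) (x : EuclideanSpace ℝ (Fin N)) (hx : 0 < x j) :
    lap (fun y => (y j) ^ α * ‖y‖ ^ (2 - (N : ℝ) - 2 * α)) x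
      + (μ / (x j) ^ 2) * ((x j) ^ α * ‖x‖ ^ (2 - (N : ℝ) - 2 * α)) = 0 := by
  set b : ℝ := (2 - (N : ℝ) - 2 * α) / 2 with hbdef
  have hfun : (fun y : EuclideanSpace ℝ (Fin N) => (y j) ^ α * ‖y‖ ^ (2 - (N : ℝ) - 2 * α))
      = V j α b := by
    funext y
    unfold V
    congr 1
    rw [EuclideanSpace.norm_eq]
    have h1 : (∑ i, ‖y i‖ ^ 2) = S y := by simp [S, Real.norm_eq_abs, sq_abs]
    rw [h1, Real.sqrt_eq_rpow, ← Real.rpow_mul (S_nonneg y)]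
    congr 1
    ring
  rw [hfun, congrFun hfun x]
  -- abbreviations
  have hs : 0 < S x := S_pos hx
  have hmem : {y : EuclideanSpace ℝ (Fin N) | 0 < y j} ∈ 𝓝 x := by
    have hopen : IsOpen {y : EuclideanSpace ℝ (Fin N) | 0 < y j} :=
      isOpen_lt continuous_const
        (EuclideanSpace.proj j : EuclideanSpace ℝ (Fin N) →L[ℝ] ℝ).continuous
    exact hopen.mem_nhds hx
  set g : Fin N → EuclideanSpace ℝ (Fin N) → ℝ := fun i y =>
    (2 * b) * (V j α (b - 1) y * y i)
      + (α * (if j = i then 1 else 0)) * V j (α - 1) b y with hgdef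
  have hg : ∀ i, (fun y => fderiv ℝ (V j α b) y (EuclideanSpace.single i 1)) =ᶠ[𝓝 x] g i := by
    intro i
    filter_upwards [hmem] with y hy
    rw [(hasFDerivAt_V j α b hy).fderiv, D_apply, hgdef]
    unfold V
    ring
  have hgd : ∀ i, HasFDerivAt (g i)
      ((2 * b) • ((V j α (b - 1) x) • (EuclideanSpace.proj i : EuclideanSpace ℝ (Fin N) →L[ℝ] ℝ)
          + (x i) • D j α (b - 1) x)
        + (α * (if j = i then 1 else 0)) • D j (α - 1) b x) x := by
    intro i
    have h1 : HasFDerivAt (fun y : EuclideanSpace ℝ (Fin N) => V j α (b - 1) y * y i)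
        ((V j α (b - 1) x) • (EuclideanSpace.proj i : EuclideanSpace ℝ (Fin N) →L[ℝ] ℝ)
          + (x i) • D j α (b - 1) x) x :=
      (hasFDerivAt_V j α (b - 1) hx).mul
        ((EuclideanSpace.proj i : EuclideanSpace ℝ (Fin N) →L[ℝ] ℝ).hasFDerivAt)
    exact (h1.const_mul (2 * b)).add ((hasFDerivAt_V j (α - 1) b hx).const_mul _)
  set c0 : ℝ := 2 * b * ((x j) ^ α * (S x) ^ (b - 1)) with hc0
  set c1 : ℝ := 4 * b * (b - 1) * (x j) ^ α * (S x) ^ (b - 2) with hc1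
  set c2 : ℝ := 4 * α * b * (x j) ^ (α - 1) * x j * (S x) ^ (b - 1)
      + α * (α - 1) * (x j) ^ (α - 2) * (S x) ^ b with hc2
  have hT : ∀ i, fderiv ℝ (fun y => fderiv ℝ (V j α b) y (EuclideanSpace.single i 1)) x
      (EuclideanSpace.single i 1) = c0 + c1 * (x i) ^ 2 + (if j = i then c2 else 0) := by
    intro i
    rw [(hg i).fderiv_eq, (hgd i).fderiv]
    simp [ContinuousLinearMap.add_apply, ContinuousLinearMap.smul_apply, smul_eq_mul,
      D_apply, PiLp.proj_apply, EuclideanSpace.single_apply]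
    by_cases h : j = i
    · subst h
      simp [D_apply, hc0, hc1, hc2]
      unfold V
      ring
    · simp [D_apply, h, hc0, hc1, hc2]
      unfold V
      ring
  have hlap : lap (V j α b) x = (N : ℝ) * c0 + c1 * S x + c2 := by
    unfold lap
    rw [Finset.sum_congr rfl fun i _ => hT i]
    rw [Finset.sum_add_distrib, Finset.sum_add_distrib, Finset.sum_const, Finset.card_univ,
      Fintype.card_fin, ← Finset.mul_sum, Finset.sum_ite_eq Finset.univ j,
      if_pos (Finset.mem_univ j)]
    push_cast
    unfold S
    ring
  rw [hlap]
  -- final algebra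
  have ht : (0:ℝ) < x j := hx
  have hαμ : α * (α - 1) = -μ := by
    have h4 : (0:ℝ) ≤ 1/4 - μ := by linarith [hμ.2]
    have h5 := Real.sq_sqrt h4
    rw [hα]
    linear_combination h5
  have e1 : (x j) ^ (α - 1) = (x j) ^ α / x j := by
    rw [Real.rpow_sub ht, Real.rpow_one]
  have e2 : (x j) ^ (α - 2) = (x j) ^ α / (x j * x j) := by
    rw [show α - 2 = α - 1 - 1 by ring, Real.rpow_sub ht, Real.rpow_sub ht, Real.rpow_one,
      div_div]
  have e3 : (S x) ^ (b - 1) = (S x) ^ b / S x := by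
    rw [Real.rpow_sub hs, Real.rpow_one]
  have e4 : (S x) ^ (b - 2) = (S x) ^ b / (S x * S x) := by
    rw [show b - 2 = b - 1 - 1 by ring, Real.rpow_sub hs, Real.rpow_sub hs, Real.rpow_one,
      div_div]
  rw [hc0, hc1, hc2, hαμ, e1, e2, e3, e4]
  unfold V
  have ht' : x j ≠ 0 := ht.ne'
  have hs' : S x ≠ 0 := hs.ne'
  rw [hbdef]
  field_simp
  ring
end Stmt18Aux

/-- The half-space Martin kernel `K(x) = x_N^α |x|^{2-N-2α}` with pole at the boundary
point `0` is `L_μ`-harmonic on the half-space. -/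
theorem stmt_18 (N : ℕ) (hN : 3 ≤ N) (μ α : ℝ)
    (hμ : μ ∈ Set.Ioc (0:ℝ) (1/4)) (hα : α = 1/2 + Real.sqrt (1/4 - μ)) :
    ∀ x : EuclideanSpace ℝ (Fin N), 0 < x (lastIdx N (by omega)) →
      lap (fun y => (y (lastIdx N (by omega))) ^ α * ‖y‖ ^ (2 - (N : ℝ) - 2 * α)) x
        + (μ / (x (lastIdx N (by omega))) ^ 2) *
            ((x (lastIdx N (by omega))) ^ α * ‖x‖ ^ (2 - (N : ℝ) - 2 * α))
        = 0 := by
  intro x hx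
  exact Stmt18Aux.main_aux N hN μ α hμ hα (lastIdx N (by omega)) x hx
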